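/- For φ(L) = ∑_α φ_α L^α a bounded operator in the free Hardy algebra and 0 < r < 1, the radial dilate φ_r(L) := ∑_α r^{|α|} φ_α L^α satisfies ‖φ_r(L)‖ ≤ ‖φ(L)‖, where |α| denotes word length and the coefficients φ_α are the Fourier coefficients ⟨e_α, φ(L) e_∅⟩. -/

import Mathlib

set_option maxHeartbeats 1000000

open scoped ComplexInnerProductSpace ENNReal

noncomputable abbrev FockSpace (d : ℕ) := lp (fun _ : List (Fin d) => ℂ) 2

noncomputable def fockBasis {d : ℕ} (α : List (Fin d)) : FockSpace d :=
  lp.single 2 α (1 : ℂ)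

/-- Membership in the closure of a set of operators in the weak operator
topology: every WOT-basic neighborhood of `T` meets the algebra. -/
def MemWOTClosure {d : ℕ} (A : Subalgebra ℂ (FockSpace d →L[ℂ] FockSpace d))
    (T : FockSpace d →L[ℂ] FockSpace d) : Prop :=
  ∀ ε > (0 : ℝ), ∀ F : Finset (FockSpace d × FockSpace d),
    ∃ p ∈ A, ∀ z ∈ F, ‖⟪z.2, T z.1 - p z.1⟫‖ < ε

section Aux

variable {d : ℕ}

lemma fockBasis_apply (α w : List (Fin d)) :
    (fockBasis α : ∀ _ : List (Fin d), ℂ) w = if w = α then 1 else 0 := by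
  rcases eq_or_ne w α with rfl | h
  · simp [fockBasis, lp.single_apply_self]
  · simp [fockBasis, lp.single_apply_ne _ _ _ h, h]

lemma inner_fockBasis_left (β : List (Fin d)) (f : FockSpace d) :
    ⟪fockBasis β, f⟫ = f β := by
  rw [fockBasis, lp.inner_single_left]
  simp [RCLike.inner_apply]

lemma inner_fockBasis_fockBasis (β α : List (Fin d)) :
    ⟪fockBasis β, fockBasis α⟫ = if β = α then 1 else 0 := by
  rw [inner_fockBasis_left, fockBasis_apply]

lemma single_eq_smul (w : List (Fin d)) (c : ℂ) :
    lp.single 2 w c = c • fockBasis w := by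
  rw [fockBasis, ← lp.single_smul]
  norm_num

lemma dense_span_fockBasis :
    Dense ((Submodule.span ℂ (Set.range (fockBasis (d := d))) :
      Submodule ℂ (FockSpace d)) : Set (FockSpace d)) := by
  intro f
  have h : HasSum (fun w : List (Fin d) => lp.single 2 w (f w)) f :=
    lp.hasSum_single (by norm_num) f
  refine mem_closure_of_tendsto h ?_
  filter_upwards with s
  refine Submodule.sum_mem _ fun w _ => ?_
  rw [single_eq_smul]
  exact Submodule.smul_mem _ _ (Submodule.subset_span ⟨w, rfl⟩)

/-- The right-multiplication (by the word `s`) function on coordinates. -/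
noncomputable def rmulFun (s : List (Fin d)) (f : List (Fin d) → ℂ) : List (Fin d) → ℂ :=
  fun w => if s <:+ w then f (w.take (w.length - s.length)) else 0

lemma app_len (t s : List (Fin d)) : (t ++ s).length - s.length = t.length := by
  simp [List.length_append]

lemma rmulFun_append (s : List (Fin d)) (f : List (Fin d) → ℂ) (t : List (Fin d)) :
    rmulFun s f (t ++ s) = f t := by
  rw [rmulFun, if_pos (List.suffix_append t s), app_len, List.take_left]

lemma rmulFun_zero (s : List (Fin d)) (f : List (Fin d) → ℂ) {w : List (Fin d)}
    (h : ¬ s <:+ w) : rmulFun s f w = 0 := if_neg h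

lemma summable_sq (f : FockSpace d) :
    Summable fun w : List (Fin d) => ‖(f : ∀ _ : List (Fin d), ℂ) w‖ ^ (2 : ℝ≥0∞).toReal :=
  (memℓp_gen_iff (by norm_num)).mp (lp.memℓp f)

lemma append_injective (s : List (Fin d)) :
    Function.Injective fun t : List (Fin d) => t ++ s :=
  fun a b h => by simpa using h

lemma rmul_aux (s : List (Fin d)) (f : FockSpace d) :
    ∀ w ∉ Set.range (fun t : List (Fin d) => t ++ s),
      ‖rmulFun s (⇑f) w‖ ^ (2 : ℝ≥0∞).toReal = 0 := by
  intro w hw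
  rw [rmulFun_zero s _ (fun ⟨t, ht⟩ => hw ⟨t, ht⟩), norm_zero,
    Real.zero_rpow (by norm_num)]

lemma memℓp_rmulFun (s : List (Fin d)) (f : FockSpace d) : Memℓp (rmulFun s ⇑f) 2 := by
  apply memℓp_gen
  refine (Function.Injective.summable_iff (append_injective s) (rmul_aux s f)).mp ?_
  have h : ((fun w => ‖rmulFun s (⇑f) w‖ ^ (2 : ℝ≥0∞).toReal) ∘ fun t : List (Fin d) => t ++ s)
      = fun t => ‖(f : ∀ _ : List (Fin d), ℂ) t‖ ^ (2 : ℝ≥0∞).toReal := by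
    funext t
    simp only [Function.comp_apply, rmulFun_append]
  rw [h]
  exact summable_sq f

/-- Right multiplication by `s` as a linear map. -/
noncomputable def RopL (s : List (Fin d)) : FockSpace d →ₗ[ℂ] FockSpace d where
  toFun f := ⟨rmulFun s ⇑f, memℓp_rmulFun s f⟩
  map_add' f g := by
    apply lp.ext
    funext w
    show rmulFun s (⇑(f + g)) w = rmulFun s (⇑f) w + rmulFun s (⇑g) w
    rw [lp.coeFn_add]
    unfold rmulFun
    split <;> simp
  map_smul' c f := by
    apply lp.ext
    funext w
    show rmulFun s (⇑(c • f)) w = c • rmulFun s (⇑f) w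
    rw [lp.coeFn_smul]
    unfold rmulFun
    split <;> simp

lemma norm_RopL (s : List (Fin d)) (f : FockSpace d) : ‖RopL s f‖ = ‖f‖ := by
  rw [lp.norm_eq_tsum_rpow (by norm_num) (RopL s f), lp.norm_eq_tsum_rpow (by norm_num) f]
  congr 1
  have hsupp : Function.support (fun w => ‖rmulFun s (⇑f) w‖ ^ (2 : ℝ≥0∞).toReal)
      ⊆ Set.range (fun t : List (Fin d) => t ++ s) :=
    Function.support_subset_iff'.mpr (rmul_aux s f)
  have h1 : ∑' c : List (Fin d), ‖rmulFun s (⇑f) (c ++ s)‖ ^ (2 : ℝ≥0∞).toReal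
      = ∑' w : List (Fin d), ‖rmulFun s (⇑f) w‖ ^ (2 : ℝ≥0∞).toReal :=
    Function.Injective.tsum_eq (append_injective s) hsupp
  have h2 : ∑' c : List (Fin d), ‖rmulFun s (⇑f) (c ++ s)‖ ^ (2 : ℝ≥0∞).toReal
      = ∑' c : List (Fin d), ‖(f : ∀ _ : List (Fin d), ℂ) c‖ ^ (2 : ℝ≥0∞).toReal := by
    refine tsum_congr fun t => ?_
    rw [rmulFun_append]
  calc ∑' i, ‖(RopL s f : ∀ _ : List (Fin d), ℂ) i‖ ^ (2 : ℝ≥0∞).toReal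
      = ∑' w : List (Fin d), ‖rmulFun s (⇑f) w‖ ^ (2 : ℝ≥0∞).toReal := rfl
    _ = _ := by rw [← h1, h2]

/-- Right multiplication by `s` as a continuous linear map. -/
noncomputable def Rop (s : List (Fin d)) : FockSpace d →L[ℂ] FockSpace d :=
  (RopL s).mkContinuous 1 (fun f => by rw [norm_RopL, one_mul])

lemma Rop_coeFn (s : List (Fin d)) (f : FockSpace d) (w : List (Fin d)) :
    (Rop s f : ∀ _ : List (Fin d), ℂ) w = rmulFun s (⇑f) w := rfl

lemma Rop_fockBasis (s t : List (Fin d)) : Rop s (fockBasis t) = fockBasis (t ++ s) := by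
  apply lp.ext
  funext w
  rw [Rop_coeFn, fockBasis_apply]
  by_cases h : s <:+ w
  · obtain ⟨u, rfl⟩ := h
    rw [rmulFun_append, fockBasis_apply]
    by_cases hu : u = t
    · simp [hu]
    · rw [if_neg hu, if_neg (fun h => hu (by simpa using h))]
  · rw [rmulFun_zero s _ h, if_neg (fun hw => h (by rw [hw]; exact List.suffix_append t s))]

lemma inner_fockBasis_Rop (s γ : List (Fin d)) (v : FockSpace d) :
    ⟪fockBasis (γ ++ s), Rop s v⟫ = ⟪fockBasis γ, v⟫ := by
  rw [inner_fockBasis_left, inner_fockBasis_left]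
  exact rmulFun_append s (⇑v) γ

lemma inner_fockBasis_Rop_zero (s : List (Fin d)) {β : List (Fin d)} (h : ¬ s <:+ β)
    (v : FockSpace d) : ⟪fockBasis β, Rop s v⟫ = 0 := by
  rw [inner_fockBasis_left]
  exact rmulFun_zero s _ h

lemma adjoin_comm (L : Fin d → FockSpace d →L[ℂ] FockSpace d)
    (hL : ∀ (i : Fin d) (α : List (Fin d)), L i (fockBasis α) = fockBasis (i :: α))
    {p : FockSpace d →L[ℂ] FockSpace d} (hp : p ∈ Algebra.adjoin ℂ (Set.range L))
    (s : List (Fin d)) :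
    (Rop s).comp p = p.comp (Rop s) := by
  induction hp using Algebra.adjoin_induction with
  | mem x hx =>
      obtain ⟨i, rfl⟩ := hx
      refine ContinuousLinearMap.ext_on dense_span_fockBasis ?_
      rintro _ ⟨γ, rfl⟩
      simp [ContinuousLinearMap.comp_apply, hL, Rop_fockBasis, List.cons_append]
  | algebraMap c =>
      rw [Algebra.algebraMap_eq_smul_one]
      simp [ContinuousLinearMap.comp_smul, ContinuousLinearMap.smul_comp,
        ContinuousLinearMap.one_def, ContinuousLinearMap.comp_id, ContinuousLinearMap.id_comp]
  | add x y hx hy ihx ihy =>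
      rw [ContinuousLinearMap.comp_add, ContinuousLinearMap.add_comp, ihx, ihy]
  | mul x y hx hy ihx ihy =>
      rw [ContinuousLinearMap.mul_def, ← ContinuousLinearMap.comp_assoc, ihx,
        ContinuousLinearMap.comp_assoc, ihy, ContinuousLinearMap.comp_assoc]

lemma poly_apply (L : Fin d → FockSpace d →L[ℂ] FockSpace d)
    (hL : ∀ (i : Fin d) (α : List (Fin d)), L i (fockBasis α) = fockBasis (i :: α))
    {p : FockSpace d →L[ℂ] FockSpace d} (hp : p ∈ Algebra.adjoin ℂ (Set.range L))
    (α : List (Fin d)) :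
    p (fockBasis α) = Rop α (p (fockBasis ([] : List (Fin d)))) := by
  have h0 : fockBasis α = Rop α (fockBasis ([] : List (Fin d))) := by
    rw [Rop_fockBasis, List.nil_append]
  rw [h0, ← ContinuousLinearMap.comp_apply, ← adjoin_comm L hL hp α,
    ContinuousLinearMap.comp_apply]

lemma wot_entry₁ (L : Fin d → FockSpace d →L[ℂ] FockSpace d)
    (hL : ∀ (i : Fin d) (α : List (Fin d)), L i (fockBasis α) = fockBasis (i :: α))
    {T : FockSpace d →L[ℂ] FockSpace d}
    (hT : MemWOTClosure (Algebra.adjoin ℂ (Set.range L)) T) (γ α : List (Fin d)) :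
    ⟪fockBasis (γ ++ α), T (fockBasis α)⟫ = ⟪fockBasis γ, T (fockBasis ([] : List (Fin d)))⟫ := by
  classical
  rw [← sub_eq_zero]
  by_contra hX
  set X := ⟪fockBasis (γ ++ α), T (fockBasis α)⟫
    - ⟪fockBasis γ, T (fockBasis ([] : List (Fin d)))⟫ with hXdef
  have hXpos : 0 < ‖X‖ := norm_pos_iff.mpr hX
  obtain ⟨p, hpA, hp⟩ := hT (‖X‖ / 2) (by positivity)
    {(fockBasis α, fockBasis (γ ++ α)), (fockBasis ([] : List (Fin d)), fockBasis γ)}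
  have h1 := hp (fockBasis α, fockBasis (γ ++ α)) (by simp)
  have h2 := hp (fockBasis ([] : List (Fin d)), fockBasis γ) (by simp)
  simp only [map_sub, inner_sub_right] at h1 h2
  have hpe : ⟪fockBasis (γ ++ α), p (fockBasis α)⟫
      = ⟪fockBasis γ, p (fockBasis ([] : List (Fin d)))⟫ := by
    rw [poly_apply L hL hpA α, inner_fockBasis_Rop]
  have hXeq : X = (⟪fockBasis (γ ++ α), T (fockBasis α)⟫
        - ⟪fockBasis (γ ++ α), p (fockBasis α)⟫)
      - (⟪fockBasis γ, T (fockBasis ([] : List (Fin d)))⟫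
        - ⟪fockBasis γ, p (fockBasis ([] : List (Fin d)))⟫) := by
    rw [hXdef, hpe]; ring
  have : ‖X‖ < ‖X‖ / 2 + ‖X‖ / 2 := by
    calc ‖X‖ ≤ ‖⟪fockBasis (γ ++ α), T (fockBasis α)⟫
          - ⟪fockBasis (γ ++ α), p (fockBasis α)⟫‖
        + ‖⟪fockBasis γ, T (fockBasis ([] : List (Fin d)))⟫
          - ⟪fockBasis γ, p (fockBasis ([] : List (Fin d)))⟫‖ := by
          rw [hXeq]; exact norm_sub_le _ _
      _ < ‖X‖ / 2 + ‖X‖ / 2 := add_lt_add h1 h2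
  linarith

lemma wot_entry₀ (L : Fin d → FockSpace d →L[ℂ] FockSpace d)
    (hL : ∀ (i : Fin d) (α : List (Fin d)), L i (fockBasis α) = fockBasis (i :: α))
    {T : FockSpace d →L[ℂ] FockSpace d}
    (hT : MemWOTClosure (Algebra.adjoin ℂ (Set.range L)) T) {α β : List (Fin d)}
    (h : ¬ α <:+ β) :
    ⟪fockBasis β, T (fockBasis α)⟫ = 0 := by
  classical
  by_contra hX
  set X := ⟪fockBasis β, T (fockBasis α)⟫ with hXdef
  have hXpos : 0 < ‖X‖ := norm_pos_iff.mpr hX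
  obtain ⟨p, hpA, hp⟩ := hT (‖X‖ / 2) (by positivity) {(fockBasis α, fockBasis β)}
  have h1 := hp (fockBasis α, fockBasis β) (by simp)
  simp only [map_sub, inner_sub_right] at h1
  have hpe : ⟪fockBasis β, p (fockBasis α)⟫ = 0 := by
    rw [poly_apply L hL hpA α, inner_fockBasis_Rop_zero α h]
  rw [hpe, sub_zero] at h1
  rw [← hXdef] at h1
  linarith

/-- Defect coefficient. -/
noncomputable def cc (r : ℝ) (s : List (Fin d)) : ℝ :=
  if s = [] then 1 else Real.sqrt (1 - r ^ 2)

/-- Poisson kernel frame vectors. -/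
noncomputable def kv (r : ℝ) (s α : List (Fin d)) : FockSpace d :=
  if s <:+ α then
    ((cc r s * r ^ (α.length - s.length) : ℝ) : ℂ) • fockBasis (α.take (α.length - s.length))
  else 0

/-- Frame weights. -/
noncomputable def wfun (r : ℝ) (s α : List (Fin d)) : ℝ :=
  if s <:+ α then cc r s ^ 2 * (r ^ (α.length - s.length)) ^ 2 else 0

lemma kv_append (r : ℝ) (s t : List (Fin d)) :
    kv r s (t ++ s) = ((cc r s * r ^ t.length : ℝ) : ℂ) • fockBasis t := by
  rw [kv, if_pos (List.suffix_append t s), app_len, List.take_left]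

lemma kv_zero (r : ℝ) {s α : List (Fin d)} (h : ¬ s <:+ α) : kv r s α = 0 := if_neg h

lemma wfun_nonneg (r : ℝ) (s α : List (Fin d)) : 0 ≤ wfun r s α := by
  rw [wfun]
  split
  · positivity
  · exact le_rfl

lemma inner_kv_ne (r : ℝ) (s : List (Fin d)) {β α : List (Fin d)} (h : β ≠ α) :
    ⟪kv r s β, kv r s α⟫ = 0 := by
  by_cases hβ : s <:+ β
  · by_cases hα : s <:+ α
    · obtain ⟨u, rfl⟩ := hβ
      obtain ⟨t, rfl⟩ := hα
      have hut : u ≠ t := fun e => h (by rw [e])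
      rw [kv_append, kv_append, inner_smul_left, inner_smul_right,
        inner_fockBasis_fockBasis, if_neg hut]
      ring
    · rw [kv_zero r hα, inner_zero_right]
  · rw [kv_zero r hβ, inner_zero_left]

lemma inner_kv_self (r : ℝ) (s α : List (Fin d)) :
    ⟪kv r s α, kv r s α⟫ = ((wfun r s α : ℝ) : ℂ) := by
  by_cases h : s <:+ α
  · obtain ⟨t, rfl⟩ := h
    rw [kv_append, inner_smul_left, inner_smul_right, inner_fockBasis_fockBasis, if_pos rfl,
      wfun, if_pos (List.suffix_append t s), app_len, Complex.conj_ofReal]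
    push_cast
    ring
  · rw [kv_zero r h, inner_zero_left, wfun, if_neg h]
    norm_num

lemma drop_inj_range (α : List (Fin d)) :
    ∀ m ∈ Finset.range (α.length + 1), ∀ n ∈ Finset.range (α.length + 1),
      α.drop m = α.drop n → m = n := by
  intro m hm n hn h
  rw [Finset.mem_range] at hm hn
  have := congrArg List.length h
  rw [List.length_drop, List.length_drop] at this
  omega

lemma suffix_eq_drop {s α : List (Fin d)} (h : s <:+ α) :
    α.drop (α.length - s.length) = s ∧ α.length - s.length ≤ α.length := by
  obtain ⟨t, rfl⟩ := h
  rw [app_len]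
  exact ⟨List.drop_left, by simp [List.length_append]⟩

lemma sum_over_suffixes {M : Type*} [AddCommMonoid M] (α : List (Fin d))
    (F : List (Fin d) → M) (hF : ∀ s, ¬ s <:+ α → F s = 0) {S : Finset (List (Fin d))}
    (hS : ∀ n ≤ α.length, α.drop n ∈ S) :
    ∑ s ∈ S, F s = ∑ n ∈ Finset.range (α.length + 1), F (α.drop n) := by
  classical
  have himg : ∑ n ∈ Finset.range (α.length + 1), F (α.drop n)
      = ∑ s ∈ (Finset.range (α.length + 1)).image (α.drop ·), F s :=
    (Finset.sum_image (drop_inj_range α)).symm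
  rw [himg]
  refine (Finset.sum_subset ?_ ?_).symm
  · intro s hs
    obtain ⟨n, hn, rfl⟩ := Finset.mem_image.mp hs
    rw [Finset.mem_range] at hn
    exact hS n (by omega)
  · intro s hsS hsim
    refine hF s fun hsuf => hsim ?_
    obtain ⟨hdrop, hle⟩ := suffix_eq_drop hsuf
    exact Finset.mem_image.mpr ⟨α.length - s.length, Finset.mem_range.mpr (by omega), hdrop⟩

lemma wfun_drop (r : ℝ) (α : List (Fin d)) {n : ℕ} (hn : n ≤ α.length) :
    wfun r (α.drop n) α = cc r (α.drop n) ^ 2 * (r ^ n) ^ 2 := by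
  have h : α.length - (α.length - n) = n := by omega
  rw [wfun, if_pos (List.drop_suffix n α), List.length_drop, h]

lemma geom_one {r : ℝ} (hr0 : 0 < r) (hr1 : r < 1) (α : List (Fin d)) :
    ∑ n ∈ Finset.range (α.length + 1), wfun r (α.drop n) α = 1 := by
  have hterm : ∀ n ∈ Finset.range (α.length + 1),
      wfun r (α.drop n) α = (if n = α.length then 1 else 1 - r ^ 2) * (r ^ 2) ^ n := by
    intro n hn
    rw [Finset.mem_range] at hn
    have hn' : n ≤ α.length := by omega
    rw [wfun_drop r α hn', cc]
    by_cases hcase : n = α.length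
    · rw [if_pos (by rw [List.drop_eq_nil_iff]; omega), if_pos hcase]
      ring
    · rw [if_neg (fun hnil => hcase (by rw [List.drop_eq_nil_iff] at hnil; omega)), if_neg hcase,
        Real.sq_sqrt (by nlinarith)]
      ring
  rw [Finset.sum_congr rfl hterm, Finset.sum_range_succ, if_pos rfl]
  have h1 : ∀ n ∈ Finset.range α.length,
      (if n = α.length then (1:ℝ) else 1 - r ^ 2) * (r ^ 2) ^ n = (1 - r ^ 2) * (r ^ 2) ^ n := by
    intro n hn
    rw [Finset.mem_range] at hn
    rw [if_neg (by omega)]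
  rw [Finset.sum_congr rfl h1, ← Finset.mul_sum, geom_sum_eq (by nlinarith : (r^2 : ℝ) ≠ 1)]
  have h2 : (r^2 : ℝ) - 1 ≠ 0 := by nlinarith
  field_simp
  ring

lemma mem_suffixesF {s α : List (Fin d)} (h : s <:+ α) :
    s ∈ (Finset.range (α.length + 1)).image (α.drop ·) := by
  obtain ⟨hdrop, hle⟩ := suffix_eq_drop h
  exact Finset.mem_image.mpr ⟨α.length - s.length, Finset.mem_range.mpr (by omega), hdrop⟩

lemma sum_wfun_le {r : ℝ} (hr0 : 0 < r) (hr1 : r < 1) (S : Finset (List (Fin d)))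
    (α : List (Fin d)) : ∑ s ∈ S, wfun r s α ≤ 1 := by
  classical
  set SF := (Finset.range (α.length + 1)).image (α.drop ·) with hSF
  have h1 : ∑ s ∈ S, wfun r s α = ∑ s ∈ S ∩ SF, wfun r s α := by
    refine (Finset.sum_subset Finset.inter_subset_left ?_).symm
    intro s hsS hsn
    have hns : ¬ s <:+ α := fun hsuf => hsn (Finset.mem_inter.mpr ⟨hsS, mem_suffixesF hsuf⟩)
    rw [wfun, if_neg hns]
  have h2 : ∑ s ∈ S ∩ SF, wfun r s α ≤ ∑ s ∈ SF, wfun r s α :=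
    Finset.sum_le_sum_of_subset_of_nonneg Finset.inter_subset_right
      (fun s _ _ => wfun_nonneg r s α)
  have h3 : ∑ s ∈ SF, wfun r s α = 1 := by
    rw [hSF, Finset.sum_image (drop_inj_range α)]
    exact geom_one hr0 hr1 α
  linarith

lemma expand_norm_sq (C : Finset (List (Fin d))) (f : List (Fin d) → ℂ)
    (g : List (Fin d) → FockSpace d) (w : List (Fin d) → ℝ)
    (horth : ∀ a ∈ C, ∀ b ∈ C, a ≠ b → ⟪g a, g b⟫ = 0)
    (hdiag : ∀ a ∈ C, ⟪g a, g a⟫ = ((w a : ℝ) : ℂ)) :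
    ‖∑ a ∈ C, f a • g a‖ ^ 2 = ∑ a ∈ C, ‖f a‖ ^ 2 * w a := by
  have hinner : ⟪∑ a ∈ C, f a • g a, ∑ a ∈ C, f a • g a⟫
      = ((∑ a ∈ C, ‖f a‖ ^ 2 * w a : ℝ) : ℂ) := by
    rw [sum_inner, Complex.ofReal_sum]
    refine Finset.sum_congr rfl fun a ha => ?_
    rw [inner_sum, Finset.sum_eq_single a]
    · rw [inner_smul_left, inner_smul_right, hdiag a ha, ← mul_assoc,
        mul_comm ((starRingEnd ℂ) (f a)) (f a), Complex.mul_conj, Complex.normSq_eq_norm_sq]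
      push_cast
      ring
    · intro b hb hba
      rw [inner_smul_right, inner_smul_left, horth a ha b hb (fun e => hba e.symm)]
      ring
    · intro h; exact absurd ha h
  have h := inner_self_eq_norm_sq (𝕜 := ℂ) (∑ a ∈ C, f a • g a)
  rw [hinner] at h
  rw [← h]
  rfl

lemma cs_aux {ι : Type*} (S : Finset ι) (U V : ι → ℝ) (Y X : ℝ) (hY : 0 ≤ Y) (hX : 0 ≤ X)
    (hU : ∑ s ∈ S, U s ^ 2 ≤ Y ^ 2) (hV : ∑ s ∈ S, V s ^ 2 ≤ X ^ 2)
    (hUn : ∀ s ∈ S, 0 ≤ U s) (hVn : ∀ s ∈ S, 0 ≤ V s) :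
    ∑ s ∈ S, U s * V s ≤ Y * X := by
  have h2 := Finset.sum_mul_sq_le_sq_mul_sq S U V
  have h3 : (∑ s ∈ S, U s * V s) ^ 2 ≤ (Y * X) ^ 2 := by
    calc (∑ s ∈ S, U s * V s) ^ 2 ≤ (∑ s ∈ S, U s ^ 2) * ∑ s ∈ S, V s ^ 2 := h2
      _ ≤ Y ^ 2 * X ^ 2 := by
          refine mul_le_mul hU hV (Finset.sum_nonneg fun s _ => sq_nonneg _) (by positivity)
      _ = (Y * X) ^ 2 := by ring
  refine (pow_le_pow_iff_left₀ ?_ (by positivity) (by norm_num)).mp h3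
  exact Finset.sum_nonneg fun s hs => mul_nonneg (hUn s hs) (hVn s hs)

lemma main_bound {d : ℕ} (φL φr : FockSpace d →L[ℂ] FockSpace d) (r : ℝ)
    (hr0 : 0 < r) (hr1 : r < 1)
    (mL1 : ∀ γ α : List (Fin d), ⟪fockBasis (γ ++ α), φL (fockBasis α)⟫
      = ⟪fockBasis γ, φL (fockBasis ([] : List (Fin d)))⟫)
    (mL0 : ∀ α β : List (Fin d), ¬ α <:+ β → ⟪fockBasis β, φL (fockBasis α)⟫ = 0)
    (mr1 : ∀ γ α : List (Fin d), ⟪fockBasis (γ ++ α), φr (fockBasis α)⟫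
      = ((r ^ γ.length : ℝ) : ℂ) * ⟪fockBasis γ, φL (fockBasis ([] : List (Fin d)))⟫)
    (mr0 : ∀ α β : List (Fin d), ¬ α <:+ β → ⟪fockBasis β, φr (fockBasis α)⟫ = 0) :
    ‖φr‖ ≤ ‖φL‖ := by
  classical
  -- pointwise frame identity
  have C1 : ∀ (β α : List (Fin d)) (S : Finset (List (Fin d))),
      (∀ n ≤ α.length, α.drop n ∈ S) →
      ∑ s ∈ S, ⟪kv r s β, φL (kv r s α)⟫ = ⟪fockBasis β, φr (fockBasis α)⟫ := by
    intro β α S hS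
    rw [sum_over_suffixes α _ (fun s hs => by rw [kv_zero r hs, map_zero, inner_zero_right]) hS]
    have hkα : ∀ n ≤ α.length,
        kv r (α.drop n) α = ((cc r (α.drop n) * r ^ n : ℝ) : ℂ) • fockBasis (α.take n) := by
      intro n hn
      have hα : α.take n ++ α.drop n = α := List.take_append_drop n α
      have hlen : (α.take n).length = n := by
        rw [List.length_take]; omega
      have h := kv_append r (α.drop n) (α.take n)
      rw [hα, hlen] at h
      exact h
    by_cases hsuf : α <:+ β
    · obtain ⟨γ, rfl⟩ := hsuf
      have hterm : ∀ n ∈ Finset.range (α.length + 1),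
          ⟪kv r (α.drop n) (γ ++ α), φL (kv r (α.drop n) α)⟫
          = ((wfun r (α.drop n) α : ℝ) : ℂ)
            * (((r ^ γ.length : ℝ) : ℂ) * ⟪fockBasis γ, φL (fockBasis ([] : List (Fin d)))⟫) := by
        intro n hn
        rw [Finset.mem_range] at hn
        have hn' : n ≤ α.length := by omega
        have hα : α.take n ++ α.drop n = α := List.take_append_drop n α
        have hkβ : kv r (α.drop n) (γ ++ α)
            = ((cc r (α.drop n) * r ^ (γ.length + n) : ℝ) : ℂ) • fockBasis (γ ++ α.take n) := by
          have hlen2 : (γ ++ α.take n).length = γ.length + n := by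
            rw [List.length_append, List.length_take]; omega
          have h := kv_append r (α.drop n) (γ ++ α.take n)
          rw [List.append_assoc, hα, hlen2] at h
          exact h
        rw [hkα n hn', hkβ, inner_smul_left, map_smul, inner_smul_right, mL1 γ (α.take n),
          Complex.conj_ofReal, wfun_drop r α hn']
        push_cast
        ring
      rw [Finset.sum_congr rfl hterm, ← Finset.sum_mul, ← Complex.ofReal_sum,
        geom_one hr0 hr1 α, mr1 γ α]
      norm_num
    · have hterm0 : ∀ n ∈ Finset.range (α.length + 1),
          ⟪kv r (α.drop n) β, φL (kv r (α.drop n) α)⟫ = 0 := by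
        intro n hn
        rw [Finset.mem_range] at hn
        have hn' : n ≤ α.length := by omega
        have hα : α.take n ++ α.drop n = α := List.take_append_drop n α
        by_cases hdb : α.drop n <:+ β
        · obtain ⟨u, rfl⟩ := hdb
          rw [hkα n hn', kv_append, inner_smul_left, map_smul, inner_smul_right]
          have h0 : ⟪fockBasis u, φL (fockBasis (α.take n))⟫ = 0 := by
            refine mL0 _ _ fun ⟨γ', hg⟩ => hsuf ?_
            exact ⟨γ', by rw [← hg, List.append_assoc, hα]⟩
          rw [h0]
          ring
        · rw [kv_zero r hdb, inner_zero_left]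
      rw [Finset.sum_congr rfl hterm0, Finset.sum_const_zero, mr0 α β hsuf]
  -- finite-support bound
  have FB : ∀ (A B : Finset (List (Fin d))) (a b : List (Fin d) → ℂ),
      ‖⟪∑ β ∈ B, b β • fockBasis β, φr (∑ α ∈ A, a α • fockBasis α)⟫‖
        ≤ ‖φL‖ * (‖∑ β ∈ B, b β • fockBasis β‖ * ‖∑ α ∈ A, a α • fockBasis α‖) := by
    intro A B a b
    set x := ∑ α ∈ A, a α • fockBasis α with hx
    set y := ∑ β ∈ B, b β • fockBasis β with hy
    set S := A.biUnion (fun α => (Finset.range (α.length + 1)).image (α.drop ·)) with hSdef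
    have hS : ∀ α ∈ A, ∀ n ≤ α.length, α.drop n ∈ S := by
      intro α hα n hn
      exact Finset.mem_biUnion.mpr ⟨α, hα,
        Finset.mem_image.mpr ⟨n, Finset.mem_range.mpr (by omega), rfl⟩⟩
    set u : List (Fin d) → FockSpace d := fun s => ∑ β ∈ B, b β • kv r s β with hu
    set v : List (Fin d) → FockSpace d := fun s => ∑ α ∈ A, a α • kv r s α with hv
    have bil : ∀ (T : FockSpace d →L[ℂ] FockSpace d) (g h : List (Fin d) → FockSpace d),
        ⟪∑ β ∈ B, b β • g β, T (∑ α ∈ A, a α • h α)⟫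
          = ∑ β ∈ B, ∑ α ∈ A, (starRingEnd ℂ) (b β) * a α * ⟪g β, T (h α)⟫ := by
      intro T g h
      rw [map_sum, sum_inner]
      refine Finset.sum_congr rfl fun β _ => ?_
      rw [inner_sum]
      refine Finset.sum_congr rfl fun α _ => ?_
      rw [map_smul, inner_smul_left, inner_smul_right]
      ring
    have hswap : ⟪y, φr x⟫ = ∑ s ∈ S, ⟪u s, φL (v s)⟫ := by
      rw [hy, hx, bil φr fockBasis fockBasis]
      have h2 : ∀ β ∈ B, ∀ α ∈ A, (starRingEnd ℂ) (b β) * a α * ⟪fockBasis β, φr (fockBasis α)⟫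
          = ∑ s ∈ S, (starRingEnd ℂ) (b β) * a α * ⟪kv r s β, φL (kv r s α)⟫ := by
        intro β _ α hα
        rw [← Finset.mul_sum, C1 β α S (hS α hα)]
      calc ∑ β ∈ B, ∑ α ∈ A, (starRingEnd ℂ) (b β) * a α * ⟪fockBasis β, φr (fockBasis α)⟫
          = ∑ β ∈ B, ∑ α ∈ A, ∑ s ∈ S,
              (starRingEnd ℂ) (b β) * a α * ⟪kv r s β, φL (kv r s α)⟫ := by
            refine Finset.sum_congr rfl fun β hβ => Finset.sum_congr rfl fun α hα => ?_
            exact h2 β hβ α hα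
        _ = ∑ β ∈ B, ∑ s ∈ S, ∑ α ∈ A,
              (starRingEnd ℂ) (b β) * a α * ⟪kv r s β, φL (kv r s α)⟫ :=
            Finset.sum_congr rfl fun β _ => Finset.sum_comm
        _ = ∑ s ∈ S, ∑ β ∈ B, ∑ α ∈ A,
              (starRingEnd ℂ) (b β) * a α * ⟪kv r s β, φL (kv r s α)⟫ :=
            Finset.sum_comm
        _ = ∑ s ∈ S, ⟪u s, φL (v s)⟫ := by
            refine Finset.sum_congr rfl fun s _ => ?_
            rw [hu, hv, bil φL (fun β => kv r s β) (fun α => kv r s α)]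
    have hnormx : ‖x‖ ^ 2 = ∑ α ∈ A, ‖a α‖ ^ 2 * 1 := by
      rw [hx]
      refine expand_norm_sq A a fockBasis (fun _ => 1) ?_ ?_
      · intro p _ q _ hpq
        rw [inner_fockBasis_fockBasis, if_neg hpq]
      · intro p _
        rw [inner_fockBasis_fockBasis, if_pos rfl]
        norm_num
    have hnormy : ‖y‖ ^ 2 = ∑ β ∈ B, ‖b β‖ ^ 2 * 1 := by
      rw [hy]
      refine expand_norm_sq B b fockBasis (fun _ => 1) ?_ ?_
      · intro p _ q _ hpq
        rw [inner_fockBasis_fockBasis, if_neg hpq]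
      · intro p _
        rw [inner_fockBasis_fockBasis, if_pos rfl]
        norm_num
    have hnormv : ∀ s, ‖v s‖ ^ 2 = ∑ α ∈ A, ‖a α‖ ^ 2 * wfun r s α := by
      intro s
      exact expand_norm_sq A a (fun α => kv r s α) (fun α => wfun r s α)
        (fun p _ q _ hpq => inner_kv_ne r s hpq) (fun p _ => inner_kv_self r s p)
    have hnormu : ∀ s, ‖u s‖ ^ 2 = ∑ β ∈ B, ‖b β‖ ^ 2 * wfun r s β := by
      intro s
      exact expand_norm_sq B b (fun β => kv r s β) (fun β => wfun r s β)
        (fun p _ q _ hpq => inner_kv_ne r s hpq) (fun p _ => inner_kv_self r s p)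
    have hsumv : ∑ s ∈ S, ‖v s‖ ^ 2 ≤ ‖x‖ ^ 2 := by
      calc ∑ s ∈ S, ‖v s‖ ^ 2 = ∑ s ∈ S, ∑ α ∈ A, ‖a α‖ ^ 2 * wfun r s α :=
            Finset.sum_congr rfl fun s _ => hnormv s
        _ = ∑ α ∈ A, ∑ s ∈ S, ‖a α‖ ^ 2 * wfun r s α := Finset.sum_comm
        _ = ∑ α ∈ A, ‖a α‖ ^ 2 * ∑ s ∈ S, wfun r s α := by
            refine Finset.sum_congr rfl fun α _ => ?_
            rw [Finset.mul_sum]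
        _ ≤ ∑ α ∈ A, ‖a α‖ ^ 2 * 1 := by
            refine Finset.sum_le_sum fun α _ => ?_
            exact mul_le_mul_of_nonneg_left (sum_wfun_le hr0 hr1 S α) (by positivity)
        _ = ‖x‖ ^ 2 := hnormx.symm
    have hsumu : ∑ s ∈ S, ‖u s‖ ^ 2 ≤ ‖y‖ ^ 2 := by
      calc ∑ s ∈ S, ‖u s‖ ^ 2 = ∑ s ∈ S, ∑ β ∈ B, ‖b β‖ ^ 2 * wfun r s β :=
            Finset.sum_congr rfl fun s _ => hnormu s
        _ = ∑ β ∈ B, ∑ s ∈ S, ‖b β‖ ^ 2 * wfun r s β := Finset.sum_comm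
        _ = ∑ β ∈ B, ‖b β‖ ^ 2 * ∑ s ∈ S, wfun r s β := by
            refine Finset.sum_congr rfl fun β _ => ?_
            rw [Finset.mul_sum]
        _ ≤ ∑ β ∈ B, ‖b β‖ ^ 2 * 1 := by
            refine Finset.sum_le_sum fun β _ => ?_
            exact mul_le_mul_of_nonneg_left (sum_wfun_le hr0 hr1 S β) (by positivity)
        _ = ‖y‖ ^ 2 := hnormy.symm
    have hCS : ∑ s ∈ S, ‖u s‖ * ‖v s‖ ≤ ‖y‖ * ‖x‖ :=
      cs_aux S (fun s => ‖u s‖) (fun s => ‖v s‖) ‖y‖ ‖x‖ (norm_nonneg y) (norm_nonneg x)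
        hsumu hsumv (fun s _ => norm_nonneg _) (fun s _ => norm_nonneg _)
    calc ‖⟪y, φr x⟫‖ = ‖∑ s ∈ S, ⟪u s, φL (v s)⟫‖ := by rw [hswap]
      _ ≤ ∑ s ∈ S, ‖⟪u s, φL (v s)⟫‖ := norm_sum_le _ _
      _ ≤ ∑ s ∈ S, ‖u s‖ * (‖φL‖ * ‖v s‖) := by
          refine Finset.sum_le_sum fun s _ => ?_
          calc ‖⟪u s, φL (v s)⟫‖ ≤ ‖u s‖ * ‖φL (v s)‖ := norm_inner_le_norm _ _
            _ ≤ ‖u s‖ * (‖φL‖ * ‖v s‖) :=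
                mul_le_mul_of_nonneg_left (φL.le_opNorm (v s)) (norm_nonneg _)
      _ = ‖φL‖ * ∑ s ∈ S, ‖u s‖ * ‖v s‖ := by
          rw [Finset.mul_sum]
          refine Finset.sum_congr rfl fun s _ => ?_
          ring
      _ ≤ ‖φL‖ * (‖y‖ * ‖x‖) := mul_le_mul_of_nonneg_left hCS (norm_nonneg _)
  -- extend by density
  have span_rep : ∀ z ∈ Submodule.span ℂ (Set.range (fockBasis (d := d))),
      ∃ (C : Finset (List (Fin d))) (f : List (Fin d) → ℂ),
        z = ∑ w ∈ C, f w • fockBasis w := by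
    intro z hz
    obtain ⟨c, rfl⟩ := Finsupp.mem_span_range_iff_exists_finsupp.mp hz
    exact ⟨c.support, c, rfl⟩
  have step1 : ∀ y ∈ Submodule.span ℂ (Set.range (fockBasis (d := d))),
      ∀ x : FockSpace d, ‖⟪y, φr x⟫‖ ≤ ‖φL‖ * (‖y‖ * ‖x‖) := by
    intro y hy x
    obtain ⟨B, b, rfl⟩ := span_rep y hy
    set y' := ∑ w ∈ B, b w • fockBasis w with hy'
    have hcl : IsClosed {x : FockSpace d | ‖⟪y', φr x⟫‖ ≤ ‖φL‖ * (‖y'‖ * ‖x‖)} := by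
      refine isClosed_le ?_ ?_
      · exact (Continuous.inner continuous_const φr.continuous).norm
      · exact continuous_const.mul (continuous_const.mul continuous_norm)
    have hsub : ((Submodule.span ℂ (Set.range (fockBasis (d := d))) :
        Submodule ℂ (FockSpace d)) : Set (FockSpace d))
        ⊆ {x : FockSpace d | ‖⟪y', φr x⟫‖ ≤ ‖φL‖ * (‖y'‖ * ‖x‖)} := by
      intro x hx
      obtain ⟨A, a, rfl⟩ := span_rep x hx
      exact FB A B a b
    have hxcl : x ∈ closure ((Submodule.span ℂ (Set.range (fockBasis (d := d))) :
        Submodule ℂ (FockSpace d)) : Set (FockSpace d)) := by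
      rw [dense_span_fockBasis.closure_eq]
      trivial
    exact closure_minimal hsub hcl hxcl
  have key : ∀ x y : FockSpace d, ‖⟪y, φr x⟫‖ ≤ ‖φL‖ * (‖y‖ * ‖x‖) := by
    intro x y
    have hcl : IsClosed {y : FockSpace d | ‖⟪y, φr x⟫‖ ≤ ‖φL‖ * (‖y‖ * ‖x‖)} := by
      refine isClosed_le ?_ ?_
      · exact (Continuous.inner continuous_id continuous_const).norm
      · exact continuous_const.mul (continuous_norm.mul continuous_const)
    have hsub : ((Submodule.span ℂ (Set.range (fockBasis (d := d))) :
        Submodule ℂ (FockSpace d)) : Set (FockSpace d))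
        ⊆ {y : FockSpace d | ‖⟪y, φr x⟫‖ ≤ ‖φL‖ * (‖y‖ * ‖x‖)} := by
      intro y' hy'
      exact step1 y' hy' x
    have hycl : y ∈ closure ((Submodule.span ℂ (Set.range (fockBasis (d := d))) :
        Submodule ℂ (FockSpace d)) : Set (FockSpace d)) := by
      rw [dense_span_fockBasis.closure_eq]
      trivial
    exact closure_minimal hsub hcl hycl
  refine φr.opNorm_le_bound (norm_nonneg φL) fun x => ?_
  rcases eq_or_ne ‖φr x‖ 0 with h0 | h0
  · rw [h0]
    positivity
  · have hpos : 0 < ‖φr x‖ := lt_of_le_of_ne (norm_nonneg _) (Ne.symm h0)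
    have h := key x (φr x)
    have hsq : ‖(⟪φr x, φr x⟫ : ℂ)‖ = ‖φr x‖ ^ 2 := by
      rw [inner_self_eq_norm_sq_to_K (𝕜 := ℂ)]
      simp
    rw [hsq] at h
    nlinarith

end Aux

/-- for `φ(L)` in the free Hardy algebra (the WOT-closed algebra
generated by the left creation operators `L`) and `0 < r < 1`, any radial dilate
`φ_r(L)` in the Hardy algebra with Fourier coefficients
`⟨e_α, φ_r(L) e_∅⟩ = r^{|α|} ⟨e_α, φ(L) e_∅⟩` satisfies `‖φ_r(L)‖ ≤ ‖φ(L)‖`. -/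
theorem radial_dilate_norm_le {d : ℕ}
    (L : Fin d → FockSpace d →L[ℂ] FockSpace d)
    (hL : ∀ (i : Fin d) (α : List (Fin d)), L i (fockBasis α) = fockBasis (i :: α))
    (φL φr : FockSpace d →L[ℂ] FockSpace d)
    (hφ : MemWOTClosure (Algebra.adjoin ℂ (Set.range L)) φL)
    (hφr : MemWOTClosure (Algebra.adjoin ℂ (Set.range L)) φr)
    (r : ℝ) (hr0 : 0 < r) (hr1 : r < 1)
    (hcoeff : ∀ α : List (Fin d),
      ⟪fockBasis α, φr (fockBasis ([] : List (Fin d)))⟫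
        = ((r ^ α.length : ℝ) : ℂ) * ⟪fockBasis α, φL (fockBasis ([] : List (Fin d)))⟫) :
    ‖φr‖ ≤ ‖φL‖ := by
  have mL1 := wot_entry₁ L hL hφ
  have mL0 : ∀ α β : List (Fin d), ¬ α <:+ β → ⟪fockBasis β, φL (fockBasis α)⟫ = 0 :=
    fun α β h => wot_entry₀ L hL hφ h
  have mr1 : ∀ γ α : List (Fin d), ⟪fockBasis (γ ++ α), φr (fockBasis α)⟫
      = ((r ^ γ.length : ℝ) : ℂ) * ⟪fockBasis γ, φL (fockBasis ([] : List (Fin d)))⟫ := by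
    intro γ α
    rw [wot_entry₁ L hL hφr γ α, hcoeff γ]
  have mr0 : ∀ α β : List (Fin d), ¬ α <:+ β → ⟪fockBasis β, φr (fockBasis α)⟫ = 0 :=
    fun α β h => wot_entry₀ L hL hφr h
  exact main_bound φL φr r hr0 hr1 mL1 mL0 mr1 mr0
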